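/- In the complete metric space C([0,1], ℝ) of continuous real-valued functions on the unit interval with the supremum metric, the set of all functions f for which there exists a point x ∈ [0,1] and a real number L such that f has derivative L at x within [0,1] (i.e., f is differentiable at some point of [0,1], one-sidedly at the endpoints) is a meagre subset. In particular, its complement — the set of nowhere differentiable continuous functions — is comeagre. -/

import Mathlib

open Set Metric

/-- Distance to the nearest integer. -/
noncomputable def SZ.saw (t : ℝ) : ℝ := |t - round t|

namespace SZ

lemma saw_nonneg (t : ℝ) : 0 ≤ saw t := abs_nonneg _

lemma saw_le_half (t : ℝ) : saw t ≤ 1/2 := abs_sub_round t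

lemma saw_le (t : ℝ) (n : ℤ) : saw t ≤ |t - n| := by
  rcases le_or_gt (1/2) |t - (n:ℝ)| with h | h
  · exact (abs_sub_round t).trans h
  · have h1 : t - n < 1/2 ∧ n - t < 1/2 := abs_sub_lt_iff.mp h
    have : round t = n := by
      rw [round_eq, Int.floor_eq_iff]
      constructor <;> push_cast <;> [linarith [h1.2]; linarith [h1.1]]
    rw [saw, this]

lemma saw_lipschitz (a b : ℝ) : |saw a - saw b| ≤ |a - b| := by
  have h1 : saw a ≤ |a - b| + saw b := by
    calc saw a ≤ |a - round b| := saw_le a (round b)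
      _ ≤ |a - b| + |b - round b| := by
          have := abs_sub_le a b (round b); simpa using this
      _ = |a - b| + saw b := rfl
  have h2 : saw b ≤ |b - a| + saw a := by
    calc saw b ≤ |b - round a| := saw_le b (round a)
      _ ≤ |b - a| + |a - round a| := by
          have := abs_sub_le b a (round a); simpa using this
      _ = |b - a| + saw a := rfl
  rw [abs_sub_comm b a] at h2
  rw [abs_sub_le_iff]
  constructor <;> linarith

lemma saw_continuous : Continuous saw := by
  refine LipschitzWith.continuous (K := 1) ?_
  refine LipschitzWith.of_dist_le_mul fun a b => ?_
  simpa [Real.dist_eq] using saw_lipschitz a b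

lemma saw_int (n : ℤ) : saw (n : ℝ) = 0 := by
  simp [saw, round_intCast]

lemma saw_int_add_half (n : ℤ) : saw ((n : ℝ) + 1/2) = 1/2 := by
  have : round ((n : ℝ) + 1/2) = n + 1 := by
    rw [round_eq]
    have : (n : ℝ) + 1/2 + 1/2 = ((n + 1 : ℤ) : ℝ) := by push_cast; ring
    rw [this, Int.floor_intCast]
  rw [saw, this]
  push_cast
  rw [abs_of_nonpos] <;> linarith

lemma saw_int_sub_half (n : ℤ) : saw ((n : ℝ) - 1/2) = 1/2 := by
  have : round ((n : ℝ) - 1/2) = n := by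
    rw [round_eq]
    have : (n : ℝ) - 1/2 + 1/2 = ((n : ℤ) : ℝ) := by ring
    rw [this, Int.floor_intCast]
  rw [saw, this]
  rw [abs_of_nonpos] <;> linarith

/-- Functions admitting a point where difference quotients are bounded by `n`. -/
def E (n : ℕ) : Set C(Set.Icc (0:ℝ) 1, ℝ) :=
  {f | ∃ x : Set.Icc (0:ℝ) 1, ∀ y : Set.Icc (0:ℝ) 1,
    |f y - f x| ≤ n * |(y:ℝ) - (x:ℝ)|}

lemma isClosed_E (n : ℕ) : IsClosed (E n) := by
  have h : E n = Prod.fst '' {p : C(Set.Icc (0:ℝ) 1, ℝ) × Set.Icc (0:ℝ) 1 |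
      ∀ y : Set.Icc (0:ℝ) 1, |p.1 y - p.1 p.2| ≤ n * |(y:ℝ) - (p.2:ℝ)|} := by
    ext f
    constructor
    · rintro ⟨x, hx⟩; exact ⟨(f, x), hx, rfl⟩
    · rintro ⟨⟨g, x⟩, hgx, rfl⟩; exact ⟨x, hgx⟩
  rw [h]
  apply isClosedMap_fst_of_compactSpace
  have : {p : C(Set.Icc (0:ℝ) 1, ℝ) × Set.Icc (0:ℝ) 1 |
      ∀ y : Set.Icc (0:ℝ) 1, |p.1 y - p.1 p.2| ≤ n * |(y:ℝ) - (p.2:ℝ)|} =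
      ⋂ y : Set.Icc (0:ℝ) 1, {p : C(Set.Icc (0:ℝ) 1, ℝ) × Set.Icc (0:ℝ) 1 |
        |p.1 y - p.1 p.2| ≤ n * |(y:ℝ) - (p.2:ℝ)|} := by
    ext p; simp [Set.mem_iInter]
  rw [this]
  refine isClosed_iInter fun y => ?_
  have hc1 : Continuous fun p : C(Set.Icc (0:ℝ) 1, ℝ) × Set.Icc (0:ℝ) 1 => |p.1 y - p.1 p.2| := by
    apply Continuous.abs
    exact ((continuous_eval_const y).comp continuous_fst).sub continuous_eval
  have hc2 : Continuous fun p : C(Set.Icc (0:ℝ) 1, ℝ) × Set.Icc (0:ℝ) 1 =>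
      (n : ℝ) * |(y:ℝ) - (p.2:ℝ)| := by
    exact continuous_const.mul ((continuous_const.sub
      (continuous_subtype_val.comp continuous_snd)).abs)
  exact isClosed_le hc1 hc2

lemma exists_mem_E {f : C(Set.Icc (0:ℝ) 1, ℝ)} {x L : ℝ} {h01 : (0:ℝ) ≤ 1} (hx : x ∈ Set.Icc (0:ℝ) 1)
    (hd : HasDerivWithinAt (Set.IccExtend h01 (⇑f)) L (Set.Icc (0:ℝ) 1) x) :
    ∃ n : ℕ, f ∈ E n := by
  set F := Set.IccExtend h01 (⇑f) with hF
  have hO : (fun y => F y - F x) =O[nhdsWithin x (Set.Icc (0:ℝ) 1)] (fun y => y - x) :=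
    HasFDerivWithinAt.isBigO_sub hd
  obtain ⟨C, hC⟩ := hO.bound
  rw [Filter.eventually_iff, Metric.mem_nhdsWithin_iff] at hC
  obtain ⟨δ, hδ, hball⟩ := hC
  obtain ⟨n, hn⟩ := exists_nat_ge (max C ((2*‖f‖+1)/δ))
  refine ⟨n, ⟨⟨x, hx⟩, fun y => ?_⟩⟩
  have hfy : f y = F ↑y := (Set.IccExtend_val h01 (⇑f) y).symm
  have hfx : f ⟨x, hx⟩ = F x := (Set.IccExtend_of_mem h01 (⇑f) hx).symm
  have hCn : C ≤ (n:ℝ) := (le_max_left _ _).trans hn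
  have hC2n : (2*‖f‖+1)/δ ≤ (n:ℝ) := (le_max_right _ _).trans hn
  rcases lt_or_ge (dist (y:ℝ) x) δ with h | h
  · have hy : (y:ℝ) ∈ Metric.ball x δ ∩ Set.Icc (0:ℝ) 1 := ⟨Metric.mem_ball.mpr h, y.2⟩
    have hb := hball hy
    simp only [Set.mem_setOf_eq, Real.norm_eq_abs] at hb
    rw [hfy, hfx]
    calc |F ↑y - F x| ≤ C * |(y:ℝ) - x| := hb
      _ ≤ (n:ℝ) * |(y:ℝ) - x| := mul_le_mul_of_nonneg_right hCn (abs_nonneg _)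
  · have h2 : |f y - f ⟨x, hx⟩| ≤ 2*‖f‖ := by
      have hy1 : |f y| ≤ ‖f‖ := f.norm_coe_le_norm y
      have hy2 : |f ⟨x, hx⟩| ≤ ‖f‖ := f.norm_coe_le_norm ⟨x, hx⟩
      calc |f y - f ⟨x, hx⟩| ≤ |f y| + |f ⟨x, hx⟩| := abs_sub _ _
        _ ≤ 2*‖f‖ := by linarith
    have hnd : 2*‖f‖+1 ≤ (n:ℝ) * δ := by
      rw [div_le_iff₀ hδ] at hC2n; linarith
    have hdy : δ ≤ |(y:ℝ) - x| := by rwa [Real.dist_eq] at h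
    have hnn : (0:ℝ) ≤ (n:ℝ) := Nat.cast_nonneg n
    have : (n:ℝ) * δ ≤ (n:ℝ) * |(y:ℝ) - x| := mul_le_mul_of_nonneg_left hdy hnn
    linarith

lemma poly_lip (P : Polynomial ℝ) : ∃ M : ℝ, 0 ≤ M ∧ ∀ x ∈ Set.Icc (0:ℝ) 1, ∀ y ∈ Set.Icc (0:ℝ) 1,
    |P.eval y - P.eval x| ≤ M * |y - x| := by
  obtain ⟨M, hM⟩ := (isCompact_Icc (a := (0:ℝ)) (b := 1)).exists_bound_of_continuousOn
    (P.derivative.continuousOn_aeval)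
  refine ⟨max M 0, le_max_right _ _, fun x hx y hy => ?_⟩
  have h := (convex_Icc (0:ℝ) 1).norm_image_sub_le_of_norm_hasDerivWithin_le
    (f := fun t => P.eval t) (f' := fun t => P.derivative.eval t) (C := max M 0)
    (fun t _ => (P.hasDerivAt t).hasDerivWithinAt)
    (fun t ht => (hM t ht).trans (le_max_left _ _)) hx hy
  simpa [Real.norm_eq_abs] using h

lemma saw_steep {K : ℕ} (hK : 1 ≤ K) {x : ℝ} (hx : x ∈ Set.Icc (0:ℝ) 1) :
    ∃ y ∈ Set.Icc (0:ℝ) 1, 0 < |y - x| ∧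
      |saw ((K:ℝ)*y) - saw ((K:ℝ)*x)| = (K:ℝ) * |y - x| := by
  have hKpos : (0:ℝ) < (K:ℝ) := by exact_mod_cast hK
  have hKne : (K:ℝ) ≠ 0 := ne_of_gt hKpos
  set t := (K:ℝ) * x with ht
  set r := round t with hr
  have ht0 : 0 ≤ t := mul_nonneg hKpos.le hx.1
  have htK : t ≤ (K:ℝ) := by nlinarith [hx.2]
  have habs : |t - (r:ℝ)| ≤ 1/2 := abs_sub_round t
  have habs' : t - (r:ℝ) ≤ 1/2 ∧ (r:ℝ) - t ≤ 1/2 := abs_sub_le_iff.mp habs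
  have hr0 : (0:ℤ) ≤ r := by
    have h2 : (-1:ℤ) < r := by exact_mod_cast show (-1:ℝ) < (r:ℝ) by linarith [habs'.1]
    omega
  have hrK : r ≤ (K:ℤ) := by
    have h2 : (r:ℤ) < (K:ℤ) + 1 := by
      exact_mod_cast show (r:ℝ) < ((K:ℤ):ℝ) + 1 by push_cast; linarith [habs'.2]
    omega
  have hr0' : (0:ℝ) ≤ (r:ℝ) := by exact_mod_cast hr0
  have hrK' : (r:ℝ) ≤ (K:ℝ) := by exact_mod_cast hrK
  have hsawt : saw t = |t - (r:ℝ)| := rfl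
  rcases le_or_gt (1/4) |t - (r:ℝ)| with hA | hB
  · -- steep descent to the integer grid point r/K
    have habs_pos : (0:ℝ) < |t - (r:ℝ)| := lt_of_lt_of_le (by norm_num) hA
    have hyx : (r:ℝ)/(K:ℝ) - x = ((r:ℝ) - t)/(K:ℝ) := by field_simp; rw [ht]
    have habs_yx : |(r:ℝ)/(K:ℝ) - x| = |t - (r:ℝ)|/(K:ℝ) := by
      rw [hyx, abs_div, abs_of_pos hKpos, abs_sub_comm]
    refine ⟨(r:ℝ)/(K:ℝ), ⟨by positivity, by rw [div_le_one hKpos]; exact hrK'⟩, ?_, ?_⟩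
    · rw [habs_yx]; positivity
    · have hKy : (K:ℝ) * ((r:ℝ)/(K:ℝ)) = (r:ℝ) := by field_simp
      rw [hKy, saw_int, zero_sub, abs_neg, abs_of_nonneg (saw_nonneg t), hsawt, habs_yx]
      field_simp
  · by_cases hB1 : 0 ≤ t - (r:ℝ) ∧ r < (K:ℤ)
    · -- ascend to the peak at (r + 1/2)/K
      have hfr : t - (r:ℝ) < 1/4 := by rw [abs_of_nonneg hB1.1] at hB; exact hB
      have hrK1 : (r:ℝ) + 1 ≤ (K:ℝ) := by
        exact_mod_cast show ((r:ℤ):ℝ) + 1 ≤ ((K:ℤ):ℝ) by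
          exact_mod_cast Int.lt_iff_add_one_le.mp hB1.2
      have hyx : ((r:ℝ) + 1/2)/(K:ℝ) - x = ((r:ℝ) + 1/2 - t)/(K:ℝ) := by
        field_simp
        ring
      have hwt : (0:ℝ) < (r:ℝ) + 1/2 - t := by linarith
      have habs_yx : |((r:ℝ) + 1/2)/(K:ℝ) - x| = ((r:ℝ) + 1/2 - t)/(K:ℝ) := by
        rw [hyx, abs_div, abs_of_pos hKpos, abs_of_pos hwt]
      refine ⟨((r:ℝ) + 1/2)/(K:ℝ), ⟨by positivity, by rw [div_le_one hKpos]; linarith⟩, ?_, ?_⟩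
      · rw [habs_yx]; positivity
      · have hKy : (K:ℝ) * (((r:ℝ) + 1/2)/(K:ℝ)) = (r:ℝ) + 1/2 := by field_simp
        rw [hKy, saw_int_add_half, hsawt, abs_of_nonneg hB1.1, habs_yx,
          abs_of_nonneg (by linarith : (0:ℝ) ≤ 1/2 - (t - (r:ℝ))),
          mul_div_cancel₀ _ hKne]
        ring
    · -- ascend to the peak at (r - 1/2)/K
      push_neg at hB1
      have hfacts : t - (r:ℝ) ≤ 0 ∧ (1:ℤ) ≤ r := by
        rcases le_or_gt 0 (t - (r:ℝ)) with h0 | h0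
        · have hrKeq : r = (K:ℤ) := le_antisymm hrK (hB1 h0)
          have hrKr : (r:ℝ) = (K:ℝ) := by exact_mod_cast hrKeq
          exact ⟨by linarith, by omega⟩
        · refine ⟨le_of_lt h0, ?_⟩
          have h1 : (0:ℤ) < r := by
            exact_mod_cast show (0:ℝ) < (r:ℝ) by linarith
          omega
      have hr1 : (1:ℝ) ≤ (r:ℝ) := by exact_mod_cast hfacts.2
      have hu : |t - (r:ℝ)| = (r:ℝ) - t := by
        rw [abs_sub_comm]; exact abs_of_nonneg (by linarith [hfacts.1])
      have hfr : (r:ℝ) - t < 1/4 := by rw [hu] at hB; exact hB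
      have hyx : ((r:ℝ) - 1/2)/(K:ℝ) - x = ((r:ℝ) - 1/2 - t)/(K:ℝ) := by
        field_simp
        ring
      have hwt : (r:ℝ) - 1/2 - t < 0 := by linarith
      have habs_yx : |((r:ℝ) - 1/2)/(K:ℝ) - x| = (1/2 - ((r:ℝ) - t))/(K:ℝ) := by
        rw [hyx, abs_div, abs_of_pos hKpos, abs_of_neg hwt]; ring_nf
      refine ⟨((r:ℝ) - 1/2)/(K:ℝ), ⟨div_nonneg (by linarith) hKpos.le,
        by rw [div_le_one hKpos]; linarith⟩, ?_, ?_⟩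
      · rw [habs_yx]
        have : (0:ℝ) < 1/2 - ((r:ℝ) - t) := by linarith
        positivity
      · have hKy : (K:ℝ) * (((r:ℝ) - 1/2)/(K:ℝ)) = (r:ℝ) - 1/2 := by field_simp
        rw [hKy, saw_int_sub_half, hsawt, hu, habs_yx,
          abs_of_nonneg (by linarith : (0:ℝ) ≤ 1/2 - ((r:ℝ) - t)),
          mul_div_cancel₀ _ hKne]

lemma interior_E_empty (n : ℕ) : interior (E n) = ∅ := by
  rw [interior_eq_empty_iff_dense_compl, Metric.dense_iff]
  intro f ε hε
  obtain ⟨P, hP⟩ := exists_polynomial_near_continuousMap 0 1 f (ε/4) (by linarith)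
  set p : C(Set.Icc (0:ℝ) 1, ℝ) := P.toContinuousMapOn (Set.Icc 0 1) with hp_def
  obtain ⟨M, hM0, hM⟩ := poly_lip P
  set c : ℝ := ε/4 with hc
  have hc0 : 0 < c := by positivity
  obtain ⟨K0, hK0⟩ := exists_nat_gt (((n:ℝ) + M)/c)
  set K : ℕ := K0 + 1 with hK_def
  have hK1 : 1 ≤ K := by omega
  have hKgt : ((n:ℝ) + M)/c < (K:ℝ) := by
    have h : ((K0:ℝ)) ≤ (K:ℝ) := by exact_mod_cast Nat.le_succ K0
    linarith
  have hcK : (n:ℝ) + M < c * (K:ℝ) := by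
    rw [div_lt_iff₀ hc0] at hKgt; nlinarith
  set s : C(Set.Icc (0:ℝ) 1, ℝ) := ContinuousMap.mk (fun y => c * saw ((K:ℝ) * y))
    (continuous_const.mul (saw_continuous.comp (continuous_const.mul continuous_subtype_val)))
    with hs_def
  have hs_apply : ∀ y : Set.Icc (0:ℝ) 1, s y = c * saw ((K:ℝ) * (y:ℝ)) := fun y => rfl
  set g := p + s with hg_def
  have hg_apply : ∀ y : Set.Icc (0:ℝ) 1, g y = p y + s y := fun y => rfl
  refine ⟨g, ?_, ?_⟩
  · -- the perturbed function is close to f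
    rw [Metric.mem_ball]
    have h1 : dist g p ≤ c/2 := by
      rw [ContinuousMap.dist_le (by linarith)]
      intro z
      rw [Real.dist_eq]
      have hgp : g z - p z = c * saw ((K:ℝ) * (z:ℝ)) := by rw [hg_apply z, hs_apply z]; ring
      rw [hgp, abs_of_nonneg (mul_nonneg hc0.le (saw_nonneg _))]
      nlinarith [saw_le_half ((K:ℝ) * (z:ℝ))]
    have h2 : dist p f < ε/4 := by rwa [dist_eq_norm]
    calc dist g f ≤ dist g p + dist p f := dist_triangle _ _ _
      _ < c/2 + ε/4 := by linarith
      _ < ε := by rw [hc]; linarith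
  · -- the perturbed function is not in E n
    intro hmem
    obtain ⟨x, hxall⟩ := hmem
    obtain ⟨yv, hyv, hy_pos, hy_eq⟩ := saw_steep hK1 x.2
    set y : Set.Icc (0:ℝ) 1 := ⟨yv, hyv⟩ with hy_def
    have hg := hxall y
    have hpbound : |p y - p x| ≤ M * |(y:ℝ) - (x:ℝ)| := by
      have h := hM (x:ℝ) x.2 (y:ℝ) y.2
      simpa [hp_def, Polynomial.toContinuousMapOn_apply] using h
    have hs_eq : |s y - s x| = c * (K:ℝ) * |(y:ℝ) - (x:ℝ)| := by
      rw [hs_apply y, hs_apply x]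
      rw [← mul_sub, abs_mul, abs_of_pos hc0]
      rw [show ((y:ℝ)) = yv from rfl, hy_eq]
      ring
    have hsub : s y - s x = (g y - g x) - (p y - p x) := by
      rw [hg_apply y, hg_apply x]; ring
    have habs2 : |s y - s x| ≤ |g y - g x| + |p y - p x| := by
      rw [hsub]; exact abs_sub _ _
    rw [hs_eq] at habs2
    have hlt : ((n:ℝ) + M) * |(yv:ℝ) - (x:ℝ)| < c * (K:ℝ) * |(yv:ℝ) - (x:ℝ)| :=
      mul_lt_mul_of_pos_right hcK hy_pos
    have hyy : |((y:ℝ)) - (x:ℝ)| = |yv - (x:ℝ)| := rfl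
    rw [hyy] at habs2 hg
    nlinarith [hg, hpbound, hlt, habs2]

end SZ

/-- Baire category theorem on nowhere differentiable functions (Salzmann–Zeller):
in the space `C([0,1], ℝ)` with the supremum metric, the set of continuous
functions that are differentiable (one-sidedly at the endpoints) at at least one
point of `[0,1]` is meagre; in particular the nowhere differentiable functions
form a comeagre set. -/
theorem somewhere_differentiable_isMeagre :
    IsMeagre {f : C(Set.Icc (0 : ℝ) 1, ℝ) |
      ∃ x ∈ Set.Icc (0 : ℝ) 1, ∃ L : ℝ,
        HasDerivWithinAt (Set.IccExtend (by norm_num : (0 : ℝ) ≤ 1) f) L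
          (Set.Icc (0 : ℝ) 1) x} ∧
    {f : C(Set.Icc (0 : ℝ) 1, ℝ) |
      ∃ x ∈ Set.Icc (0 : ℝ) 1, ∃ L : ℝ,
        HasDerivWithinAt (Set.IccExtend (by norm_num : (0 : ℝ) ≤ 1) f) L
          (Set.Icc (0 : ℝ) 1) x}ᶜ ∈ residual C(Set.Icc (0 : ℝ) 1, ℝ) := by
  have hsub : {f : C(Set.Icc (0 : ℝ) 1, ℝ) |
      ∃ x ∈ Set.Icc (0 : ℝ) 1, ∃ L : ℝ,
        HasDerivWithinAt (Set.IccExtend (by norm_num : (0 : ℝ) ≤ 1) f) L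
          (Set.Icc (0 : ℝ) 1) x} ⊆ ⋃ n, SZ.E n := by
    rintro f ⟨x, hx, L, hd⟩
    obtain ⟨n, hn⟩ := SZ.exists_mem_E hx hd
    exact Set.mem_iUnion.mpr ⟨n, hn⟩
  have hmeagre : IsMeagre (⋃ n, SZ.E n) := by
    refine isMeagre_iUnion fun n => ?_
    rw [IsMeagre]
    exact residual_of_dense_open (SZ.isClosed_E n).isOpen_compl
      (interior_eq_empty_iff_dense_compl.mp (SZ.interior_E_empty n))
  exact ⟨hmeagre.mono hsub, hmeagre.mono hsub⟩
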